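/- Let s, t, α be positive integers with t > s, and let (P, L) be a partial geometry with parameters (s,t,α): P is a finite point set, L is a family of (s+1)-element subsets of P (lines) such that any two distinct lines intersect in at most one point, every point lies on exactly t+1 lines, any two distinct points lie on at most one common line, and for every non-incident point–line pair (p, M) exactly α points of M are collinear with p. Let v = |P| (so v = (s+1)(st+α)/α, and v > 2(s+1)). Then L is a resolving set for the Kneser graph K(v, s+1) whose vertex set is the set of (s+1)-element subsets of P. -/

import Mathlib

/-- The Kneser graph `K(n,k)` on a ground set `X`: vertices are the `k`-element
subsets of `X`, two vertices adjacent iff the corresponding subsets are disjoint. -/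
def kneserGraphOn (X : Type*) [DecidableEq X] (k : ℕ) :
    SimpleGraph {s : Finset X // s.card = k} where
  Adj U W := U ≠ W ∧ Disjoint U.1 W.1
  symm := by
    constructor
    intro U W h
    exact ⟨h.1.symm, h.2.symm⟩
  loopless := by
    constructor
    intro U h
    exact h.1 rfl

/-- A set `S` of vertices is a resolving set for `G` if every pair of distinct
vertices is resolved by some vertex of `S`, i.e. is at different distances from it. -/
def resolvingSet {V : Type*} (G : SimpleGraph V) (S : Set V) : Prop :=
  ∀ u v : V, u ≠ v → ∃ x ∈ S, G.dist u x ≠ G.dist v x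

/-- The metric dimension `β(G)`: the minimum cardinality of a resolving set for `G`. -/
noncomputable def metricDim {V : Type*} (G : SimpleGraph V) : ℕ :=
  sInf {m | ∃ S : Finset V, resolvingSet G ↑S ∧ S.card = m}

/-- Key combinatorial lemma: for any point `p` and any `(s+1)`-set `W` not containing
`p`, some line through `p` is disjoint from `W`. -/
lemma exists_line_through_missing
    {P : Type*} [DecidableEq P] (s t : ℕ) (hts : s < t)
    (L : Finset (Finset P))
    (hll : ∀ M ∈ L, ∀ N ∈ L, M ≠ N → (M ∩ N).card ≤ 1)
    (hpt : ∀ p : P, (L.filter (fun M => p ∈ M)).card = t + 1)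
    (p : P) (W : Finset P) (hW : W.card = s + 1) (hpW : p ∉ W) :
    ∃ M ∈ L, p ∈ M ∧ Disjoint M W := by
  by_contra hcon
  push_neg at hcon
  classical
  set F := L.filter (fun M => p ∈ M) with hF
  have hcard : W.card < F.card := by
    rw [hpt p, hW]; omega
  -- map each line through p to a point of its (nonempty) intersection with W
  have hne : ∀ M ∈ F, (M ∩ W).Nonempty := by
    intro M hM
    rw [hF, Finset.mem_filter] at hM
    have := hcon M hM.1 hM.2
    rwa [Finset.not_disjoint_iff_nonempty_inter] at this
  have hmaps : ∀ M ∈ F, (if h : (M ∩ W).Nonempty then h.choose else p) ∈ W := by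
    intro M hM
    rw [dif_pos (hne M hM)]
    exact (Finset.mem_inter.mp (hne M hM).choose_spec).2
  obtain ⟨M, hM, N, hN, hMN, heq⟩ :=
    Finset.exists_ne_map_eq_of_card_lt_of_maps_to hcard hmaps
  -- M and N are distinct lines through p sharing another point q ∈ W
  rw [hF, Finset.mem_filter] at hM hN
  set q := if h : (M ∩ W).Nonempty then h.choose else p with hq
  have hqM : q ∈ M ∩ W := by
    rw [hq, dif_pos (hne M (by rw [hF, Finset.mem_filter]; exact hM))]
    exact (hne M (by rw [hF, Finset.mem_filter]; exact hM)).choose_spec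
  have hqN : q ∈ N ∩ W := by
    have : q = if h : (N ∩ W).Nonempty then h.choose else p := heq
    rw [this, dif_pos (hne N (by rw [hF, Finset.mem_filter]; exact hN))]
    exact (hne N (by rw [hF, Finset.mem_filter]; exact hN)).choose_spec
  have hpq : p ≠ q := by
    intro h
    exact hpW (h ▸ (Finset.mem_inter.mp hqM).2)
  have hsub : {p, q} ⊆ M ∩ N := by
    intro x hx
    rcases Finset.mem_insert.mp hx with h | h
    · subst h; exact Finset.mem_inter.mpr ⟨hM.2, hN.2⟩
    · rw [Finset.mem_singleton] at h
      subst h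
      exact Finset.mem_inter.mpr ⟨(Finset.mem_inter.mp hqM).1, (Finset.mem_inter.mp hqN).1⟩
  have h2 : 2 ≤ (M ∩ N).card := by
    calc 2 = ({p, q} : Finset P).card := (Finset.card_pair hpq).symm
    _ ≤ (M ∩ N).card := Finset.card_le_card hsub
  have := hll M hM.1 N hN.1 hMN
  omega

/-- The lines of a partial geometry `pg(s,t,α)` with `t > s` form a resolving set for
the Kneser graph `K(v, s+1)` on the point set, where `v` is the number of points. -/
theorem partial_geometry_resolving_kneser
    (P : Type*) [Fintype P] [DecidableEq P] (s t α : ℕ)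
    (hs : 1 ≤ s) (ht : 1 ≤ t) (hα : 1 ≤ α) (hts : s < t)
    (L : Finset (Finset P))
    -- every line has `s+1` points
    (hline : ∀ M ∈ L, M.card = s + 1)
    -- two distinct lines meet in at most one point
    (hll : ∀ M ∈ L, ∀ N ∈ L, M ≠ N → (M ∩ N).card ≤ 1)
    -- every point lies on exactly `t+1` lines
    (hpt : ∀ p : P, (L.filter (fun M => p ∈ M)).card = t + 1)
    -- two distinct points lie on at most one common line
    (hpp : ∀ p q : P, p ≠ q → (L.filter (fun M => p ∈ M ∧ q ∈ M)).card ≤ 1)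
    -- for a non-incident point-line pair `(p, M)`, exactly `α` points of `M`
    -- are collinear with `p`
    (hpg : ∀ p : P, ∀ M ∈ L, p ∉ M →
      (M.filter (fun x => ∃ N ∈ L, p ∈ N ∧ x ∈ N)).card = α)
    -- `v = (s+1)(st+α)/α`
    (hv : α * Fintype.card P = (s + 1) * (s * t + α))
    -- `v > 2(s+1)`
    (hv2 : 2 * (s + 1) < Fintype.card P) :
    resolvingSet (kneserGraphOn P (s + 1)) {X | X.1 ∈ L} := by
  intro U W hUW
  -- pick p ∈ U \ W
  have hUW' : U.1 ≠ W.1 := fun h => hUW (Subtype.ext h)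
  have hsd : (U.1 \ W.1).Nonempty := by
    rw [Finset.sdiff_nonempty]
    intro hsub
    exact hUW' (Finset.eq_of_subset_of_card_le hsub (by rw [U.2, W.2]))
  obtain ⟨p, hp⟩ := hsd
  rw [Finset.mem_sdiff] at hp
  obtain ⟨M, hML, hpM, hdisj⟩ :=
    exists_line_through_missing s t hts L hll hpt p W.1 W.2 hp.2
  refine ⟨⟨M, hline M hML⟩, hML, ?_⟩
  have hWne : W.1 ≠ M := by
    intro h
    have : (M : Finset P).Nonempty := by
      rw [← Finset.card_pos, hline M hML]; omega
    obtain ⟨x, hx⟩ := this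
    exact (Finset.disjoint_left.mp hdisj hx) (h ▸ hx)
  -- dist W M = 1
  have hWd : (kneserGraphOn P (s + 1)).dist W ⟨M, hline M hML⟩ = 1 := by
    rw [SimpleGraph.dist_eq_one_iff_adj]
    exact ⟨fun h => hWne (congrArg Subtype.val h), hdisj.symm⟩
  -- dist U M ≠ 1 since they share p
  have hUd : (kneserGraphOn P (s + 1)).dist U ⟨M, hline M hML⟩ ≠ 1 := by
    intro h
    rw [SimpleGraph.dist_eq_one_iff_adj] at h
    exact Finset.disjoint_left.mp h.2 hp.1 hpM
  omega
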